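/- Let s₁, s₂, s₃ : ℝ → ℝ³ be differentiable functions satisfying the equations of motion. Then the total spin vector S(t) := s₁(t) + s₂(t) + s₃(t) is constant in t, and the energy H(t) := J₁ s₂(t)·s₃(t) + J₂ s₃(t)·s₁(t) + J₃ s₁(t)·s₂(t) is constant in t. In particular S², the third component S⁽³⁾ of S, and H are conserved quantities. -/

import Mathlib

open Matrix

/-- For differentiable solutions of the equations of motion of the classical
spin triangle, the total spin vector `S(t) = s₁(t)+s₂(t)+s₃(t)` and the energy
`H(t) = J₁ s₂·s₃ + J₂ s₃·s₁ + J₃ s₁·s₂` are constant in `t`; in particular `S²`, the third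
component of `S`, and `H` are conserved. -/
theorem total_spin_and_energy_conserved (J₁ J₂ J₃ : ℝ) (s₁ s₂ s₃ : ℝ → Fin 3 → ℝ)
    (hd₁ : Differentiable ℝ s₁) (hd₂ : Differentiable ℝ s₂) (hd₃ : Differentiable ℝ s₃)
    (h₁ : ∀ t, deriv s₁ t = crossProduct (J₂ • s₃ t + J₃ • s₂ t) (s₁ t))
    (h₂ : ∀ t, deriv s₂ t = crossProduct (J₃ • s₁ t + J₁ • s₃ t) (s₂ t))
    (h₃ : ∀ t, deriv s₃ t = crossProduct (J₁ • s₂ t + J₂ • s₁ t) (s₃ t)) :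
    (∀ t : ℝ, s₁ t + s₂ t + s₃ t = s₁ 0 + s₂ 0 + s₃ 0) ∧
    (∀ t : ℝ,
      J₁ * (s₂ t ⬝ᵥ s₃ t) + J₂ * (s₃ t ⬝ᵥ s₁ t) + J₃ * (s₁ t ⬝ᵥ s₂ t)
        = J₁ * (s₂ 0 ⬝ᵥ s₃ 0) + J₂ * (s₃ 0 ⬝ᵥ s₁ 0) + J₃ * (s₁ 0 ⬝ᵥ s₂ 0)) ∧
    (∀ t : ℝ, (s₁ t + s₂ t + s₃ t) ⬝ᵥ (s₁ t + s₂ t + s₃ t)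
        = (s₁ 0 + s₂ 0 + s₃ 0) ⬝ᵥ (s₁ 0 + s₂ 0 + s₃ 0)) ∧
    (∀ t : ℝ, (s₁ t + s₂ t + s₃ t) 2 = (s₁ 0 + s₂ 0 + s₃ 0) 2) := by
  have hder : ∀ (u : ℝ → Fin 3 → ℝ), Differentiable ℝ u → ∀ (t : ℝ) (i : Fin 3),
      HasDerivAt (fun t => u t i) (deriv u t i) t := by
    intro u hu t i
    exact (hasDerivAt_pi.mp (hu t).hasDerivAt) i
  have hc : ∀ (t : ℝ) (i : Fin 3), deriv s₁ t i + deriv s₂ t i + deriv s₃ t i = 0 := by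
    intro t i
    rw [h₁ t, h₂ t, h₃ t]
    fin_cases i <;>
      simp [crossProduct, Pi.add_apply, Pi.smul_apply, smul_eq_mul] <;> ring
  have hS : ∀ (t : ℝ) (i : Fin 3), s₁ t i + s₂ t i + s₃ t i = s₁ 0 i + s₂ 0 i + s₃ 0 i := by
    intro t i
    apply is_const_of_deriv_eq_zero (f := fun t => s₁ t i + s₂ t i + s₃ t i)
    · intro x
      exact (((hder s₁ hd₁ x i).add (hder s₂ hd₂ x i)).add (hder s₃ hd₃ x i)).differentiableAt
    · intro x
      have h : HasDerivAt (fun t => s₁ t i + s₂ t i + s₃ t i) _ x := ((hder s₁ hd₁ x i).add (hder s₂ hd₂ x i)).add (hder s₃ hd₃ x i)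
      rw [h.deriv]
      exact hc x i
  have hS' : ∀ t : ℝ, s₁ t + s₂ t + s₃ t = s₁ 0 + s₂ 0 + s₃ 0 := by
    intro t; funext i
    simpa using hS t i
  have hdot : ∀ (u v : ℝ → Fin 3 → ℝ), Differentiable ℝ u → Differentiable ℝ v → ∀ t : ℝ,
      HasDerivAt (fun t => u t ⬝ᵥ v t) (deriv u t ⬝ᵥ v t + u t ⬝ᵥ deriv v t) t := by
    intro u v hu hv t
    have h : HasDerivAt (fun t => u t 0 * v t 0 + u t 1 * v t 1 + u t 2 * v t 2) _ t := (((hder u hu t 0).mul (hder v hv t 0)).add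
        ((hder u hu t 1).mul (hder v hv t 1))).add ((hder u hu t 2).mul (hder v hv t 2))
    have hfun : (fun t => u t ⬝ᵥ v t)
        = fun t => u t 0 * v t 0 + u t 1 * v t 1 + u t 2 * v t 2 := by
      funext x; simp [dotProduct, Fin.sum_univ_three]
    rw [hfun]
    convert h using 1
    simp [dotProduct, Fin.sum_univ_three]; ring
  have hH : ∀ t : ℝ,
      J₁ * (s₂ t ⬝ᵥ s₃ t) + J₂ * (s₃ t ⬝ᵥ s₁ t) + J₃ * (s₁ t ⬝ᵥ s₂ t)
        = J₁ * (s₂ 0 ⬝ᵥ s₃ 0) + J₂ * (s₃ 0 ⬝ᵥ s₁ 0) + J₃ * (s₁ 0 ⬝ᵥ s₂ 0) := by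
    intro t
    have hderH : ∀ x : ℝ, HasDerivAt
        (fun t => J₁ * (s₂ t ⬝ᵥ s₃ t) + J₂ * (s₃ t ⬝ᵥ s₁ t) + J₃ * (s₁ t ⬝ᵥ s₂ t))
        (J₁ * (deriv s₂ x ⬝ᵥ s₃ x + s₂ x ⬝ᵥ deriv s₃ x)
          + J₂ * (deriv s₃ x ⬝ᵥ s₁ x + s₃ x ⬝ᵥ deriv s₁ x)
          + J₃ * (deriv s₁ x ⬝ᵥ s₂ x + s₁ x ⬝ᵥ deriv s₂ x)) x := by
      intro x
      exact (((hdot s₂ s₃ hd₂ hd₃ x).const_mul J₁).add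
        ((hdot s₃ s₁ hd₃ hd₁ x).const_mul J₂)).add ((hdot s₁ s₂ hd₁ hd₂ x).const_mul J₃)
    apply is_const_of_deriv_eq_zero
      (f := fun t => J₁ * (s₂ t ⬝ᵥ s₃ t) + J₂ * (s₃ t ⬝ᵥ s₁ t) + J₃ * (s₁ t ⬝ᵥ s₂ t))
    · intro x; exact (hderH x).differentiableAt
    · intro x
      rw [(hderH x).deriv, h₁ x, h₂ x, h₃ x]
      simp [crossProduct, dotProduct, Fin.sum_univ_three, Pi.add_apply, Pi.smul_apply,
        smul_eq_mul]
      ring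
  refine ⟨hS', hH, ?_, ?_⟩
  · intro t; rw [hS' t]
  · intro t; rw [hS' t]
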